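/- With notation as in the two-piece Cayley subdivision (Q₁ = 𝒞((AP)[i, v + A'ᵢP]) and Q₂ = 𝒞((AF)[i, conv((v+A'ᵢF) ∪ (AᵢF))]) subdividing 𝒞(AP)): there is a lattice polytope isomorphism φ₁ : 𝒞(A'P) → Q₁ given by translation by v in the i-th Cayley slice, and an affine isomorphism φ₂ : 𝒞(A''F) → Q₂, where A'' is obtained from A by inserting the row A'ᵢ above the i-th row; moreover Q₁ and Q₂ have all vertices in L_P × Λ^{m-1}. -/

import Mathlib

open Pointwise

/-- Coordinatewise cast `ℤ → ℝ`. -/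
def castF {ι : Type*} (z : ι → ℤ) : ι → ℝ := fun i => (z i : ℝ)

/-- Cast of a pair of integer vectors. -/
def castP {ι κ : Type*} (z : (ι → ℤ) × (κ → ℤ)) : (ι → ℝ) × (κ → ℝ) :=
  (castF z.1, castF z.2)

/-- The lattice polytope with vertex set `V`, as a subset of `ℝ^d`. -/
def pset {d : ℕ} (V : Finset (Fin d → ℤ)) : Set (Fin d → ℝ) :=
  convexHull ℝ (castF '' (V : Set (Fin d → ℤ)))

/-- The Minkowski sum `∑ⱼ rⱼ Pⱼ`. -/
def rowSet {d n : ℕ} (V : Fin n → Finset (Fin d → ℤ)) (r : Fin n → ℕ) :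
    Set (Fin d → ℝ) :=
  ∑ j, (r j : ℝ) • pset (V j)

/-- The Cayley polytope `𝒞(Q₁, …, Qₘ) = conv(⋃ᵢ Qᵢ × eᵢ)`. -/
def cayley {d : ℕ} {ι : Type*} [Fintype ι] [DecidableEq ι]
    (Q : ι → Set (Fin d → ℝ)) : Set ((Fin d → ℝ) × (ι → ℝ)) :=
  convexHull ℝ (⋃ i, (fun x => (x, (Pi.single i 1 : ι → ℝ))) '' Q i)

/- ### Auxiliary material -/

def castHom {ι : Type*} : (ι → ℤ) →+ (ι → ℝ) where
  toFun := castF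
  map_zero' := by funext k; simp [castF]
  map_add' := by intro a b; funext k; simp [castF]

lemma castF_image_add {ι : Type*} (s t : Set (ι → ℤ)) :
    castF '' (s + t) = castF '' s + castF '' t := Set.image_add castHom

lemma castF_sub {ι : Type*} (a b : ι → ℤ) : castF (a - b) = castF a - castF b := by
  funext k; simp [castF]

lemma castF_inj {ι : Type*} : Function.Injective (castF (ι := ι)) := by
  intro a b h; funext k; have := congrFun h k; simpa [castF] using this

def zdil {ι : Type*} (c : ℕ) (s : Set (ι → ℤ)) : Set (ι → ℤ) := (fun x => (c : ℤ) • x) '' s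

lemma castF_smul {ι : Type*} (c : ℕ) (x : ι → ℤ) : castF ((c:ℤ) • x) = (c:ℝ) • castF x := by
  funext k; simp [castF]

lemma castF_image_zdil {ι : Type*} (c : ℕ) (s : Set (ι → ℤ)) :
    castF '' (zdil c s) = (c : ℝ) • (castF '' s) := by
  ext x
  simp only [zdil, Set.mem_image, Set.mem_smul_set, Set.image_image]
  constructor
  · rintro ⟨z, hz, rfl⟩
    exact ⟨castF z, ⟨z, hz, rfl⟩, (castF_smul c z).symm⟩
  · rintro ⟨y, ⟨z, hz, rfl⟩, rfl⟩
    exact ⟨z, hz, castF_smul c z⟩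

lemma hull_finsum {E : Type*} [AddCommGroup E] [Module ℝ E] {α : Type*} (t : Finset α)
    (S : α → Set E) : convexHull ℝ (∑ a ∈ t, S a) = ∑ a ∈ t, convexHull ℝ (S a) := by
  classical
  induction t using Finset.induction_on with
  | empty => simp
  | @insert _ _ h ih => rw [Finset.sum_insert h, Finset.sum_insert h, convexHull_add, ih]

def zrow {d n : ℕ} (V : Fin n → Finset (Fin d → ℤ)) (r : Fin n → ℕ) : Set (Fin d → ℤ) :=
  ∑ j, zdil (r j) ((V j : Set (Fin d → ℤ)))

lemma castF_image_finsum {ι : Type*} {α : Type*} (t : Finset α) (S : α → Set (ι → ℤ)) :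
    castF '' (∑ a ∈ t, S a) = ∑ a ∈ t, castF '' S a := by
  classical
  induction t using Finset.induction_on with
  | empty =>
    simp only [Finset.sum_empty]
    ext x
    simp only [Set.mem_image]
    constructor
    · rintro ⟨z, hz, rfl⟩
      rw [Set.mem_zero.mp hz]
      exact map_zero castHom
    · intro hx
      rw [Set.mem_zero.mp hx]
      exact ⟨0, Set.mem_zero.mpr rfl, map_zero castHom⟩
  | @insert _ _ h ih => rw [Finset.sum_insert h, Finset.sum_insert h, castF_image_add, ih]

lemma rowSet_eq_hull {d n : ℕ} (V : Fin n → Finset (Fin d → ℤ)) (r : Fin n → ℕ) :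
    rowSet V r = convexHull ℝ (castF '' zrow V r) := by
  unfold rowSet zrow
  rw [castF_image_finsum, hull_finsum]
  congr 1
  funext jj
  rw [castF_image_zdil, convexHull_smul]
  rfl

lemma rowSet_hull_convex {d n : ℕ} (V : Fin n → Finset (Fin d → ℤ)) (r : Fin n → ℕ) :
    convexHull ℝ (rowSet V r) = rowSet V r := by
  rw [rowSet_eq_hull]
  exact (convex_convexHull ℝ _).convexHull_eq

lemma zrow_finite {d n : ℕ} (V : Fin n → Finset (Fin d → ℤ)) (r : Fin n → ℕ) :
    (zrow V r).Finite := by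
  classical
  unfold zrow
  have : ∀ t : Finset (Fin n), (∑ a ∈ t, zdil (r a) ((V a : Set (Fin d → ℤ)))).Finite := by
    intro t
    induction t using Finset.induction_on with
    | empty => simp only [Finset.sum_empty]; exact (Set.finite_singleton 0).subset (by
        intro x hx; rw [Set.mem_zero.mp hx]; exact Set.mem_singleton 0)
    | @insert a t ha ih =>
      rw [Finset.sum_insert ha]
      exact Set.Finite.add ((V a).finite_toSet.image _) ih
  exact this Finset.univ

lemma zrow_subset_closure {d n : ℕ} (V : Fin n → Finset (Fin d → ℤ)) (r : Fin n → ℕ)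
    (G : AddSubgroup (Fin d → ℤ)) (hG : ∀ j', ((V j' : Set (Fin d → ℤ))) ⊆ G) :
    zrow V r ⊆ (G : Set (Fin d → ℤ)) := by
  classical
  unfold zrow
  have : ∀ t : Finset (Fin n), (∑ a ∈ t, zdil (r a) ((V a : Set (Fin d → ℤ))))
      ⊆ (G : Set (Fin d → ℤ)) := by
    intro t
    induction t using Finset.induction_on with
    | empty =>
      intro x hx
      simp only [Finset.sum_empty] at hx
      rw [Set.mem_zero.mp hx]
      exact zero_mem G
    | @insert a t ha ih =>
      rw [Finset.sum_insert ha]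
      rintro x hx
      obtain ⟨y, hy, z, hz, rfl⟩ := Set.mem_add.mp hx
      obtain ⟨y', hy', rfl⟩ := hy
      exact add_mem (zsmul_mem (hG a hy') _) (ih hz)
  exact this Finset.univ

noncomputable def sliceEmb {d : ℕ} {ι : Type*} [Fintype ι] [DecidableEq ι] (e : ι → ℝ) :
    (Fin d → ℝ) →ᵃ[ℝ] ((Fin d → ℝ) × (ι → ℝ)) where
  toFun := fun x => (x, e)
  linear := LinearMap.inl ℝ _ _
  map_vadd' := by intro p w; ext k <;> simp

lemma sliceEmb_hull {d : ℕ} {ι : Type*} [Fintype ι] [DecidableEq ι] (e : ι → ℝ)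
    (T : Set (Fin d → ℝ)) :
    (fun x => (x, e)) '' (convexHull ℝ T) = convexHull ℝ ((fun x => (x, e)) '' T) :=
  (sliceEmb e).image_convexHull T

lemma convexHull_iUnion_convexHull {E : Type*} [AddCommGroup E] [Module ℝ E] {α : Type*}
    (U : α → Set E) :
    convexHull ℝ (⋃ a, convexHull ℝ (U a)) = convexHull ℝ (⋃ a, U a) := by
  apply Set.Subset.antisymm
  · apply convexHull_min _ (convex_convexHull ℝ _)
    exact Set.iUnion_subset fun a =>
      convexHull_min (subset_trans (Set.subset_iUnion U a) (subset_convexHull ℝ _))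
        (convex_convexHull ℝ _)
  · exact convexHull_mono (Set.iUnion_mono fun a => subset_convexHull ℝ _)

lemma cayley_hull {d : ℕ} {ι : Type*} [Fintype ι] [DecidableEq ι] (T : ι → Set (Fin d → ℝ)) :
    cayley (fun i => convexHull ℝ (T i)) =
      convexHull ℝ (⋃ i, (fun x => (x, (Pi.single i 1 : ι → ℝ))) '' T i) := by
  unfold cayley
  rw [← convexHull_iUnion_convexHull (fun i => (fun x => (x, (Pi.single i 1 : ι → ℝ))) '' T i)]
  congr 1
  exact Set.iUnion_congr fun i => sliceEmb_hull _ _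

lemma iUnion_succAbove {β : Type*} {m : ℕ} (c : Fin (m+1)) (S : Fin (m+1) → Set β) :
    (⋃ k, S k) = S c ∪ ⋃ k₀, S (c.succAbove k₀) := by
  ext x
  simp only [Set.mem_iUnion, Set.mem_union]
  constructor
  · rintro ⟨k, hk⟩
    rcases eq_or_ne k c with rfl | hne
    · exact Or.inl hk
    · obtain ⟨k₀, rfl⟩ := Fin.exists_succAbove_eq hne
      exact Or.inr ⟨k₀, hk⟩
  · rintro (h | ⟨k₀, hk⟩)
    · exact ⟨c, h⟩
    · exact ⟨_, hk⟩

noncomputable def transMap {E : Type*} [AddCommGroup E] [Module ℝ E] (c : E) : E →ᵃ[ℝ] E where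
  toFun := fun x => c + x
  linear := LinearMap.id
  map_vadd' := by
    intro p w
    simp only [LinearMap.id_coe, id_eq, vadd_eq_add]
    abel

lemma hull_translate {E : Type*} [AddCommGroup E] [Module ℝ E] (c : E) (S : Set E) :
    (fun x => c + x) '' convexHull ℝ S = convexHull ℝ ((fun x => c + x) '' S) :=
  (transMap c).image_convexHull S

lemma castF_image_translate {d : ℕ} (v : Fin d → ℤ) (Z : Set (Fin d → ℤ)) :
    castF '' ((fun z => v + z) '' Z) = (fun x => castF v + x) '' (castF '' Z) := by
  rw [Set.image_image, Set.image_image]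
  apply Set.image_congr'
  intro z
  exact map_add castHom v z

lemma translate_rowSet_hull {d n : ℕ} (V : Fin n → Finset (Fin d → ℤ)) (r : Fin n → ℕ)
    (v : Fin d → ℤ) :
    (fun x => castF v + x) '' rowSet V r
      = convexHull ℝ (castF '' ((fun z => v + z) '' zrow V r)) := by
  rw [rowSet_eq_hull, hull_translate, castF_image_translate]

lemma hull_const {E : Type*} [AddCommGroup E] [Module ℝ E] (f : E →ₗ[ℝ] ℝ) (S : Set E) (c : ℝ)
    (h : ∀ x ∈ S, f x = c) : ∀ x ∈ convexHull ℝ S, f x = c := by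
  intro x hx
  have h1 : f x ∈ f '' (convexHull ℝ S) := ⟨x, hx, rfl⟩
  rw [f.image_convexHull] at h1
  have h2 : f '' S ⊆ {c} := by rintro y ⟨z, hz, rfl⟩; exact h z hz
  have := convexHull_mono h2 h1
  rwa [convexHull_singleton, Set.mem_singleton_iff] at this

lemma rowSet_val {d n : ℕ} (ℓ : (Fin d → ℝ) →ₗ[ℝ] ℝ) (V : Fin n → Finset (Fin d → ℤ))
    (γ : Fin n → ℝ) (hγ : ∀ j', ∀ w ∈ V j', ℓ (castF w) = γ j') (r : Fin n → ℕ) :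
    ∀ x ∈ rowSet V r, ℓ x = ∑ j', (r j' : ℝ) * γ j' := by
  classical
  have key : ∀ t : Finset (Fin n), ∀ x ∈ ∑ a ∈ t, (r a : ℝ) • pset (V a),
      ℓ x = ∑ a ∈ t, (r a : ℝ) * γ a := by
    intro t
    induction t using Finset.induction_on with
    | empty => intro x hx; simp only [Finset.sum_empty] at hx ⊢; rw [Set.mem_zero.mp hx]; simp
    | @insert a t ha ih =>
      intro x hx
      rw [Finset.sum_insert ha] at hx
      obtain ⟨y, hy, z, hz, rfl⟩ := Set.mem_add.mp hx
      obtain ⟨y', hy', rfl⟩ := Set.mem_smul_set.mp hy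
      have hval : ℓ y' = γ a := by
        refine hull_const ℓ _ _ ?_ y' hy'
        rintro w ⟨w', hw', rfl⟩
        exact hγ a w' hw'
      rw [Finset.sum_insert ha, map_add, map_smul, hval, ih z hz, smul_eq_mul]
  exact key Finset.univ

lemma cayley_val {d : ℕ} {ι : Type*} [Fintype ι] [DecidableEq ι]
    (ℓ : (Fin d → ℝ) →ₗ[ℝ] ℝ) (Q : ι → Set (Fin d → ℝ)) (R : ι → ℝ)
    (h : ∀ i, ∀ x ∈ Q i, ℓ x = R i) :
    ∀ p ∈ cayley Q, ℓ p.1 = ∑ i, p.2 i * R i := by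
  classical
  set lin2 : (ι → ℝ) →ₗ[ℝ] ℝ :=
    { toFun := fun t => ∑ i, t i * R i
      map_add' := by intro a b; simp [add_mul, Finset.sum_add_distrib]
      map_smul' := by intro c a; simp [Finset.mul_sum, mul_assoc] }
  set Ψ : ((Fin d → ℝ) × (ι → ℝ)) →ₗ[ℝ] ℝ :=
    ℓ.comp (LinearMap.fst ℝ _ _) - lin2.comp (LinearMap.snd ℝ _ _) with hΨ
  have h0 : ∀ p ∈ cayley Q, Ψ p = 0 := by
    apply hull_const
    rintro p hp
    simp only [Set.mem_iUnion] at hp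
    obtain ⟨i, x, hx, rfl⟩ := hp
    have hsingle : ∑ k, (Pi.single i (1:ℝ) : ι → ℝ) k * R k = R i := by
      simp [Pi.single_apply, Finset.sum_ite_eq']
    simp only [hΨ, LinearMap.sub_apply, LinearMap.comp_apply, LinearMap.fst_apply,
      LinearMap.snd_apply]
    show ℓ x - ∑ k, (Pi.single i (1:ℝ) : ι → ℝ) k * R k = 0
    rw [hsingle, h i x hx, sub_self]
  intro p hp
  have := h0 p hp
  simp only [hΨ, LinearMap.sub_apply, LinearMap.comp_apply, LinearMap.fst_apply,
    LinearMap.snd_apply] at this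
  have h2 : ℓ p.1 - ∑ i, p.2 i * R i = 0 := this
  linarith

lemma exists_functional (d n : ℕ) (V : Fin n → Finset (Fin d → ℤ))
    (hV : ∀ j, (V j).Nonempty)
    (hsimp : ∀ j, AffineIndependent ℝ (fun x : (V j : Set (Fin d → ℤ)) => castF x.1))
    (hindep : iSupIndep (fun j => Submodule.span ℝ
      (castF '' {z | ∃ a ∈ V j, ∃ b ∈ V j, z = a - b})))
    (j : Fin n) (v : Fin d → ℤ) (hv : v ∈ V j) :
    ∃ ℓ : (Fin d → ℝ) →ₗ[ℝ] ℝ,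
      (∀ w ∈ (V j).erase v, ℓ (castF v - castF w) = 1) ∧
      (∀ j', j' ≠ j → ∀ a ∈ V j', ∀ b ∈ V j', ℓ (castF a) = ℓ (castF b)) := by
  classical
  set D : Fin n → Submodule ℝ (Fin d → ℝ) := fun j' => Submodule.span ℝ
      (castF '' {z | ∃ a ∈ V j', ∃ b ∈ V j', z = a - b}) with hD
  -- base points
  set base : Fin n → (Fin d → ℤ) := fun j' => if j' = j then v else (hV j').choose with hbase
  have hbasemem : ∀ j', base j' ∈ V j' := by
    intro j'
    by_cases h : j' = j
    · subst h; simp [hbase, hv]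
    · simpa [hbase, h] using (hV j').choose_spec
  have hbasej : base j = v := by simp [hbase]
  -- the families
  set Efam : Fin n → Set (Fin d → ℝ) :=
    fun j' => (fun w => castF w - castF (base j')) '' (((V j').erase (base j') : Finset _) : Set _)
    with hE
  -- each Efam j' lies in D j'
  have hED : ∀ j', Efam j' ⊆ D j' := by
    rintro j' x ⟨w, hw, rfl⟩
    show castF w - castF (base j') ∈ D j'
    rw [← castF_sub]
    apply Submodule.subset_span
    exact ⟨w - base j', ⟨w, (Finset.mem_erase.mp hw).2, base j', hbasemem j', rfl⟩, rfl⟩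
  -- nonzero elements
  have hEne : ∀ j', (0 : Fin d → ℝ) ∉ Efam j' := by
    rintro j' ⟨w, hw, hw0⟩
    have : castF w = castF (base j') := by
      have := sub_eq_zero.mp hw0; exact this
    exact (Finset.mem_erase.mp hw).1 (castF_inj this)
  -- pairwise-type disjointness from hindep
  have hdisj : ∀ j₀ j₁, j₀ ≠ j₁ → ∀ x, x ∈ D j₀ → x ∈ D j₁ → x = 0 := by
    intro j₀ j₁ hne x h0 h1
    have hd := iSupIndep_def.mp hindep j₀
    have hsup : x ∈ (⨆ (k) (_ : k ≠ j₀), D k) :=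
      Submodule.mem_iSup_of_mem j₁ (Submodule.mem_iSup_of_mem hne.symm h1)
    have hbot : x ∈ (⊥ : Submodule ℝ (Fin d → ℝ)) :=
      hd.le_bot (Submodule.mem_inf.mpr ⟨h0, hsup⟩)
    simpa using hbot
  -- linear independence of each family
  have hli : ∀ j', LinearIndependent ℝ (fun x : Efam j' => (x : Fin d → ℝ)) := by
    intro j'
    have h1 := (affineIndependent_iff_linearIndependent_vsub ℝ
      (fun x : ((V j' : Set (Fin d → ℤ))) => castF x.1) ⟨base j', hbasemem j'⟩).mp (hsimp j')
    have h2 := LinearIndependent.linearIndepOn_id h1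
    have hr : Set.range (fun (x : {y : ((V j' : Set (Fin d → ℤ))) // y ≠ ⟨base j', hbasemem j'⟩}) =>
        (fun x : ((V j' : Set (Fin d → ℤ))) => castF x.1) ↑x -ᵥ
          (fun x : ((V j' : Set (Fin d → ℤ))) => castF x.1) ⟨base j', hbasemem j'⟩) = Efam j' := by
      ext x
      simp only [Set.mem_range, hE, Set.mem_image, vsub_eq_sub]
      constructor
      · rintro ⟨⟨⟨w, hwV⟩, hwne⟩, rfl⟩
        refine ⟨w, ?_, rfl⟩
        simp only [Finset.coe_erase, Set.mem_diff, Set.mem_singleton_iff]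
        exact ⟨hwV, fun h => hwne (Subtype.ext h)⟩
      · rintro ⟨w, hw, rfl⟩
        simp only [Finset.coe_erase, Set.mem_diff, Set.mem_singleton_iff] at hw
        exact ⟨⟨⟨w, hw.1⟩, fun h => hw.2 (congrArg Subtype.val h)⟩, rfl⟩
    rw [hr] at h2
    exact h2
  -- independence of the union
  have hsli : LinearIndependent ℝ (fun x : (⋃ j', Efam j') => (x : Fin d → ℝ)) := by
    apply linearIndepOn_id_iUnion_finite hli
    intro j₀ t _ hj₀
    have hl : Submodule.span ℝ (Efam j₀) ≤ D j₀ := Submodule.span_le.mpr (hED j₀)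
    have hr : (⨆ j' ∈ t, Submodule.span ℝ (Efam j')) ≤ ⨆ (k) (_ : k ≠ j₀), D k := by
      refine iSup₂_le fun j' hj' => ?_
      refine le_trans (Submodule.span_le.mpr (hED j')) ?_
      exact le_iSup₂ (f := fun (k : Fin n) (_ : k ≠ j₀) => D k) j'
        (fun h => hj₀ (h ▸ hj'))
    exact Disjoint.mono hl hr (iSupIndep_def.mp hindep j₀)
  -- extend to a basis and build the functional
  set s : Set (Fin d → ℝ) := ⋃ j', Efam j' with hs_def
  set g : (Fin d → ℝ) → ℝ := fun x => if x ∈ Efam j then (-1 : ℝ) else 0 with hg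
  set b := Module.Basis.extend hsli with hb
  set ℓ : (Fin d → ℝ) →ₗ[ℝ] ℝ := b.constr ℝ (fun y => g y.1) with hℓ
  have hval : ∀ x ∈ s, ℓ x = g x := by
    intro x hx
    have hxe : x ∈ LinearIndepOn.extend (show LinearIndepOn ℝ id s from hsli) (Set.subset_univ s) :=
      LinearIndepOn.subset_extend (show LinearIndepOn ℝ id s from hsli) _ hx
    have := b.constr_basis ℝ (fun y => g y.1) ⟨x, hxe⟩
    rw [hb] at this
    rw [show (Module.Basis.extend hsli) ⟨x, hxe⟩ = x from Module.Basis.extend_apply_self _ _] at this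
    exact this
  refine ⟨ℓ, ?_, ?_⟩
  · intro w hw
    have hwE : castF w - castF v ∈ Efam j := by
      refine ⟨w, ?_, by rw [hbasej]⟩
      rw [hbasej]; exact_mod_cast hw
    have h1 : ℓ (castF w - castF v) = -1 := by
      rw [hval _ (Set.mem_iUnion.mpr ⟨j, hwE⟩), hg]
      simp [hwE]
    have : castF v - castF w = -(castF w - castF v) := by ring_nf
    rw [this, map_neg, h1]; norm_num
  · intro j' hj' a ha bb hb'
    have key : ∀ c ∈ V j', ℓ (castF c) = ℓ (castF (base j')) := by
      intro c hc
      rcases eq_or_ne c (base j') with rfl | hcne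
      · rfl
      have hcE : castF c - castF (base j') ∈ Efam j' :=
        ⟨c, by simp only [Finset.coe_erase, Set.mem_diff, Set.mem_singleton_iff]; exact ⟨hc, hcne⟩, rfl⟩
      have hnotj : castF c - castF (base j') ∉ Efam j := by
        intro hmem
        have h0 : castF c - castF (base j') = 0 :=
          hdisj j j' (Ne.symm hj') _ (hED j hmem) (hED j' hcE)
        exact hEne j' (h0 ▸ hcE)
      have h0 : ℓ (castF c - castF (base j')) = 0 := by
        rw [hval _ (Set.mem_iUnion.mpr ⟨j', hcE⟩), hg]
        simp [hnotj]
      have := map_sub ℓ (castF c) (castF (base j'))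
      rw [h0] at this
      linarith [this.symm]
    rw [key a ha, key bb hb']

noncomputable def L1 {d m : ℕ} (i : Fin m) (v : Fin d → ℤ) :
    ((Fin d → ℝ) × (Fin m → ℝ)) →ₗ[ℝ] ((Fin d → ℝ) × (Fin m → ℝ)) where
  toFun := fun p => (p.1 + p.2 i • castF v, p.2)
  map_add' := by
    intro a b
    refine Prod.ext ?_ rfl
    simp only [Prod.fst_add, Prod.snd_add, Pi.add_apply, add_smul]
    abel
  map_smul' := by
    intro c a
    refine Prod.ext ?_ rfl
    simp only [Prod.smul_fst, Prod.smul_snd, Pi.smul_apply, smul_eq_mul, RingHom.id_apply,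
      smul_add, smul_smul]

lemma part1a {d n m : ℕ} (V : Fin n → Finset (Fin d → ℤ)) (A B : Fin m → Fin n → ℕ)
    (i : Fin m) (hB : ∀ i', i' ≠ i → B i' = A i') (v : Fin d → ℤ) :
    (fun p : (Fin d → ℝ) × (Fin m → ℝ) => (p.1 + p.2 i • castF v, p.2)) ''
        cayley (fun i' => rowSet V (B i')) =
      cayley (Function.update (fun i' => rowSet V (A i')) i
        ((fun x => castF v + x) '' rowSet V (B i))) := by
  show ⇑(L1 i v) '' _ = _
  unfold cayley
  rw [(L1 i v).image_convexHull, Set.image_iUnion]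
  congr 1
  apply Set.iUnion_congr
  intro i'
  rw [Set.image_image]
  by_cases h : i' = i
  · subst h
    rw [Function.update_self, Set.image_image]
    apply Set.image_congr'
    intro x
    show (x + (Pi.single i' (1:ℝ) : Fin m → ℝ) i' • castF v, (Pi.single i' 1 : Fin m → ℝ))
      = (castF v + x, (Pi.single i' 1 : Fin m → ℝ))
    rw [Pi.single_eq_same, one_smul, add_comm]
  · rw [Function.update_of_ne h, ← hB i' h]
    apply Set.image_congr'
    intro x
    show (x + (Pi.single i' (1:ℝ) : Fin m → ℝ) i • castF v, (Pi.single i' 1 : Fin m → ℝ))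
      = (x, (Pi.single i' 1 : Fin m → ℝ))
    rw [Pi.single_eq_of_ne (Ne.symm h), zero_smul, add_zero]

lemma part1b {d m : ℕ} (i : Fin m) (v : Fin d → ℤ) :
    Function.Bijective
      (fun p : (Fin d → ℝ) × (Fin m → ℝ) => (p.1 + p.2 i • castF v, p.2)) := by
  rw [Function.bijective_iff_has_inverse]
  refine ⟨fun p => (p.1 - p.2 i • castF v, p.2), fun p => ?_, fun p => ?_⟩ <;>
    · refine Prod.ext ?_ rfl
      simp

lemma part1c {d m : ℕ} (i : Fin m) (v : Fin d → ℤ) (z : (Fin d → ℤ) × (Fin m → ℤ)) :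
    (fun p : (Fin d → ℝ) × (Fin m → ℝ) => (p.1 + p.2 i • castF v, p.2)) (castP z)
      = castP (z.1 + z.2 i • v, z.2) := by
  refine Prod.ext ?_ rfl
  show castF z.1 + (castF z.2 i) • castF v = castF (z.1 + z.2 i • v)
  funext k
  simp only [castF, Pi.add_apply, Pi.smul_apply, smul_eq_mul]
  push_cast
  ring

noncomputable def L2 {d m : ℕ} (i : Fin m) (v : Fin d → ℤ) :
    ((Fin d → ℝ) × (Fin (m+1) → ℝ)) →ₗ[ℝ] ((Fin d → ℝ) × (Fin m → ℝ)) where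
  toFun := fun p => (p.1 + p.2 i.castSucc • castF v,
    fun k => (if k = i then p.2 i.castSucc else 0) + p.2 (Fin.succAbove i.castSucc k))
  map_add' := by
    intro a b
    refine Prod.ext ?_ ?_
    · simp only [Prod.fst_add, Prod.snd_add, Pi.add_apply, add_smul]
      abel
    · funext k
      simp only [Prod.snd_add, Pi.add_apply]
      by_cases h : k = i <;> simp [h] <;> ring
  map_smul' := by
    intro c a
    refine Prod.ext ?_ ?_
    · simp only [Prod.smul_fst, Prod.smul_snd, Pi.smul_apply, smul_eq_mul, RingHom.id_apply,
        smul_add, smul_smul]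
    · funext k
      simp only [Prod.smul_fst, Prod.smul_snd, Pi.smul_apply, smul_eq_mul, RingHom.id_apply]
      by_cases h : k = i <;> simp [h] <;> ring

lemma part2a {d n m : ℕ} (W : Fin n → Finset (Fin d → ℤ)) (A B : Fin m → Fin n → ℕ)
    (C : Fin n → ℕ) (i : Fin m) (hBC : B i = C) (v : Fin d → ℤ) :
    (fun p : (Fin d → ℝ) × (Fin (m+1) → ℝ) => (p.1 + p.2 i.castSucc • castF v,
        fun k => (if k = i then p.2 i.castSucc else 0) + p.2 (Fin.succAbove i.castSucc k))) ''
        cayley (fun k => rowSet W ((Fin.insertNth i.castSucc C A : Fin (m+1) → Fin n → ℕ) k)) =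
      cayley (Function.update (fun i' => rowSet W (A i')) i
        (convexHull ℝ (((fun x => castF v + x) '' rowSet W (B i)) ∪ rowSet W (A i)))) := by
  classical
  -- rewrite RHS
  have hupd : Function.update (fun i' => rowSet W (A i')) i
      (convexHull ℝ (((fun x => castF v + x) '' rowSet W (B i)) ∪ rowSet W (A i)))
      = fun i' => convexHull ℝ ((Function.update (fun i' => rowSet W (A i')) i
          (((fun x => castF v + x) '' rowSet W (B i)) ∪ rowSet W (A i))) i') := by
    funext i'
    by_cases h : i' = i
    · subst h; rw [Function.update_self, Function.update_self]
    · rw [Function.update_of_ne h, Function.update_of_ne h, rowSet_hull_convex]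
  rw [hupd, cayley_hull]
  -- rewrite LHS
  show ⇑(L2 i v) '' _ = _
  unfold cayley
  rw [(L2 i v).image_convexHull, Set.image_iUnion]
  congr 1
  -- now a union equality
  rw [iUnion_succAbove i.castSucc
    (fun k => ⇑(L2 i v) '' ((fun x => (x, (Pi.single k 1 : Fin (m+1) → ℝ))) ''
      rowSet W ((Fin.insertNth i.castSucc C A : Fin (m+1) → Fin n → ℕ) k)))]
  -- compute each piece
  have piece1 : ⇑(L2 i v) '' ((fun x => (x, (Pi.single i.castSucc 1 : Fin (m+1) → ℝ))) ''
      rowSet W ((Fin.insertNth i.castSucc C A : Fin (m+1) → Fin n → ℕ) i.castSucc))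
      = (fun x => (x, (Pi.single i 1 : Fin m → ℝ))) '' ((fun x => castF v + x) '' rowSet W (B i)) := by
    rw [Set.image_image, Set.image_image, Fin.insertNth_apply_same, ← hBC]
    apply Set.image_congr'
    intro x
    simp only [L2, LinearMap.coe_mk, AddHom.coe_mk]
    refine Prod.ext ?_ ?_
    · simp [add_comm]
    · funext k
      simp [Pi.single_apply, Fin.succAbove_ne]
  have piece2 : ∀ k₀ : Fin m, ⇑(L2 i v) '' ((fun x =>
      (x, (Pi.single (i.castSucc.succAbove k₀) 1 : Fin (m+1) → ℝ))) ''
      rowSet W ((Fin.insertNth i.castSucc C A : Fin (m+1) → Fin n → ℕ) (i.castSucc.succAbove k₀)))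
      = (fun x => (x, (Pi.single k₀ 1 : Fin m → ℝ))) '' rowSet W (A k₀) := by
    intro k₀
    rw [Set.image_image, Fin.insertNth_apply_succAbove]
    apply Set.image_congr'
    intro x
    have hne : i.castSucc ≠ i.castSucc.succAbove k₀ := (Fin.succAbove_ne i.castSucc k₀).symm
    simp only [L2, LinearMap.coe_mk, AddHom.coe_mk]
    refine Prod.ext ?_ ?_
    · simp [Pi.single_eq_of_ne hne]
    · funext k
      simp [Pi.single_apply, Fin.succAbove_right_inj, hne]
  rw [piece1, Set.iUnion_congr piece2]
  have target : (⋃ i', (fun x => (x, (Pi.single i' 1 : Fin m → ℝ))) ''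
      ((Function.update (fun i' => rowSet W (A i')) i
        (((fun x => castF v + x) '' rowSet W (B i)) ∪ rowSet W (A i))) i'))
      = ((fun x => (x, (Pi.single i 1 : Fin m → ℝ))) '' ((fun x => castF v + x) '' rowSet W (B i)))
        ∪ ⋃ i', (fun x => (x, (Pi.single i' 1 : Fin m → ℝ))) '' rowSet W (A i') := by
    ext p
    simp only [Set.mem_iUnion, Set.mem_union]
    constructor
    · rintro ⟨i', hp⟩
      by_cases h : i' = i
      · subst h
        rw [Function.update_self, Set.image_union] at hp
        rcases hp with hp | hp
        · exact Or.inl hp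
        · exact Or.inr ⟨i', hp⟩
      · rw [Function.update_of_ne h] at hp
        exact Or.inr ⟨i', hp⟩
    · rintro (hp | ⟨i', hp⟩)
      · exact ⟨i, by rw [Function.update_self, Set.image_union]; exact Set.mem_union_left _ hp⟩
      · by_cases h : i' = i
        · subst h
          exact ⟨i', by rw [Function.update_self, Set.image_union]; exact Set.mem_union_right _ hp⟩
        · exact ⟨i', by rw [Function.update_of_ne h]; exact hp⟩
  rw [target]

lemma part2b {d n m : ℕ} (V : Fin n → Finset (Fin d → ℤ))
    (hV : ∀ j, (V j).Nonempty)
    (hsimp : ∀ j, AffineIndependent ℝ (fun x : (V j : Set (Fin d → ℤ)) => castF x.1))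
    (hindep : iSupIndep (fun j => Submodule.span ℝ
      (castF '' {z | ∃ a ∈ V j, ∃ b ∈ V j, z = a - b})))
    (A : Fin m → Fin n → ℕ) (i : Fin m) (j : Fin n) (hA : 0 < A i j)
    (v : Fin d → ℤ) (hv : v ∈ V j) :
    Set.InjOn (fun p : (Fin d → ℝ) × (Fin (m+1) → ℝ) => (p.1 + p.2 i.castSucc • castF v,
        fun k => (if k = i then p.2 i.castSucc else 0) + p.2 (Fin.succAbove i.castSucc k)))
      (cayley (fun k => rowSet (Function.update V j ((V j).erase v))
        ((Fin.insertNth i.castSucc (Function.update (A i) j (A i j - 1)) A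
          : Fin (m+1) → Fin n → ℕ) k))) := by
  classical
  obtain ⟨ℓ, P1, P2⟩ := exists_functional d n V hV hsimp hindep j v hv
  set W := Function.update V j ((V j).erase v) with hW
  set A'' : Fin (m+1) → Fin n → ℕ :=
    (Fin.insertNth i.castSucc (Function.update (A i) j (A i j - 1)) A) with hA''
  set γ : Fin n → ℝ := fun j' => if j' = j then ℓ (castF v) - 1
    else ℓ (castF ((hV j').choose)) with hγ
  have K1 : ∀ j', ∀ w ∈ W j', ℓ (castF w) = γ j' := by
    intro j' w hw
    by_cases h : j' = j
    · subst h
      rw [hW, Function.update_self] at hw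
      have h1 := P1 w hw
      rw [map_sub] at h1
      have hγj : γ j' = ℓ (castF v) - 1 := by rw [hγ]; simp
      rw [hγj]; linarith
    · rw [hW, Function.update_of_ne h] at hw
      have hγj' : γ j' = ℓ (castF ((hV j').choose)) := by rw [hγ]; simp [h]
      rw [hγj']
      exact P2 j' h w hw _ ((hV j').choose_spec)
  have K2 : ℓ (castF v) = γ j + 1 := by rw [hγ]; simp
  set R : Fin (m+1) → ℝ := fun k => ∑ j', ((A'' k j' : ℝ)) * γ j' with hR
  have hrow : ∀ k, ∀ x ∈ rowSet W (A'' k), ℓ x = R k :=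
    fun k => rowSet_val ℓ W γ K1 (A'' k)
  have K4 : ∀ p ∈ cayley (fun k => rowSet W (A'' k)), ℓ p.1 = ∑ k, p.2 k * R k :=
    cayley_val ℓ _ R hrow
  have E6 : R (i.castSucc.succAbove i) - R i.castSucc = γ j := by
    rw [hR]
    simp only [hA'', Fin.insertNth_apply_succAbove, Fin.insertNth_apply_same]
    rw [← Finset.sum_sub_distrib]
    rw [Finset.sum_eq_single j]
    · rw [Function.update_self]
      have : ((A i j - 1 : ℕ) : ℝ) = (A i j : ℝ) - 1 := by
        rw [Nat.cast_sub hA]; norm_num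
      rw [this]; ring
    · intro b _ hb
      rw [Function.update_of_ne hb]; ring
    · intro h; exact absurd (Finset.mem_univ j) h
  intro p hp q hq h
  have h1 : p.1 + p.2 i.castSucc • castF v = q.1 + q.2 i.castSucc • castF v :=
    congrArg Prod.fst h
  have h2 := congrArg Prod.snd h
  have hke : ∀ k : Fin m, k ≠ i → p.2 (Fin.succAbove i.castSucc k) =
      q.2 (Fin.succAbove i.castSucc k) := by
    intro k hk
    have := congrFun h2 k
    simpa [if_neg hk] using this
  have E5 : p.2 i.castSucc + p.2 (i.castSucc.succAbove i)
      = q.2 i.castSucc + q.2 (i.castSucc.succAbove i) := by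
    have := congrFun h2 i
    simpa using this
  have E1 : ℓ p.1 + p.2 i.castSucc * ℓ (castF v) = ℓ q.1 + q.2 i.castSucc * ℓ (castF v) := by
    have := congrArg ℓ h1
    simpa [map_add, map_smul, smul_eq_mul] using this
  have E2 : ℓ p.1 = p.2 i.castSucc * R i.castSucc
      + ∑ k₀, p.2 (i.castSucc.succAbove k₀) * R (i.castSucc.succAbove k₀) := by
    rw [K4 p hp]
    exact Fin.sum_univ_succAbove (fun k => p.2 k * R k) i.castSucc
  have E3 : ℓ q.1 = q.2 i.castSucc * R i.castSucc
      + ∑ k₀, q.2 (i.castSucc.succAbove k₀) * R (i.castSucc.succAbove k₀) := by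
    rw [K4 q hq]
    exact Fin.sum_univ_succAbove (fun k => q.2 k * R k) i.castSucc
  have E4 : ∑ k₀, p.2 (i.castSucc.succAbove k₀) * R (i.castSucc.succAbove k₀)
      - ∑ k₀, q.2 (i.castSucc.succAbove k₀) * R (i.castSucc.succAbove k₀)
      = (p.2 (i.castSucc.succAbove i) - q.2 (i.castSucc.succAbove i))
        * R (i.castSucc.succAbove i) := by
    rw [← Finset.sum_sub_distrib]
    rw [Finset.sum_eq_single i]
    · ring
    · intro b _ hb
      rw [hke b hb]; ring
    · intro hmem; exact absurd (Finset.mem_univ i) hmem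
  -- main algebra
  have key : (p.2 i.castSucc - q.2 i.castSucc)
      * (R i.castSucc - R (i.castSucc.succAbove i) + ℓ (castF v)) = 0 := by
    linear_combination E1 - E2 + E3 - E4 - R (i.castSucc.succAbove i) * E5
  have hfac : R i.castSucc - R (i.castSucc.succAbove i) + ℓ (castF v) = 1 := by
    rw [K2]; linarith
  have ha : p.2 i.castSucc = q.2 i.castSucc := by
    rw [hfac, mul_one, sub_eq_zero] at key
    exact key
  have hsnd : p.2 = q.2 := by
    funext k
    rcases eq_or_ne k i.castSucc with rfl | hk
    · exact ha
    · obtain ⟨k₀, rfl⟩ := Fin.exists_succAbove_eq hk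
      rcases eq_or_ne k₀ i with rfl | hk₀
      · have := E5
        rw [ha] at this
        linarith
      · exact hke k₀ hk₀
  have hfst : p.1 = q.1 := by
    rw [hsnd] at h1
    exact add_right_cancel h1
  exact Prod.ext hfst hsnd

lemma Q1_hull {d n m : ℕ} (V : Fin n → Finset (Fin d → ℤ)) (A B : Fin m → Fin n → ℕ)
    (i : Fin m) (v : Fin d → ℤ) :
    cayley (Function.update (fun i' => rowSet V (A i')) i
        ((fun x => castF v + x) '' rowSet V (B i)))
      = convexHull ℝ (⋃ i', (fun x => (x, (Pi.single i' 1 : Fin m → ℝ))) ''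
          (castF '' (Function.update (fun i' => zrow V (A i')) i
            ((fun z => v + z) '' zrow V (B i)) i'))) := by
  classical
  have hfun : Function.update (fun i' => rowSet V (A i')) i
      ((fun x => castF v + x) '' rowSet V (B i))
      = fun i' => convexHull ℝ (castF '' (Function.update (fun i' => zrow V (A i')) i
          ((fun z => v + z) '' zrow V (B i)) i')) := by
    funext i'
    by_cases h : i' = i
    · subst h
      rw [Function.update_self, Function.update_self, translate_rowSet_hull]
    · rw [Function.update_of_ne h, Function.update_of_ne h, rowSet_eq_hull]
  rw [hfun, cayley_hull]

lemma Q2_hull {d n m : ℕ} (W : Fin n → Finset (Fin d → ℤ)) (A B : Fin m → Fin n → ℕ)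
    (i : Fin m) (v : Fin d → ℤ) :
    cayley (Function.update (fun i' => rowSet W (A i')) i
        (convexHull ℝ (((fun x => castF v + x) '' rowSet W (B i)) ∪ rowSet W (A i))))
      = convexHull ℝ (⋃ i', (fun x => (x, (Pi.single i' 1 : Fin m → ℝ))) ''
          (castF '' (Function.update (fun i' => zrow W (A i')) i
            (((fun z => v + z) '' zrow W (B i)) ∪ zrow W (A i)) i'))) := by
  classical
  have hfun : Function.update (fun i' => rowSet W (A i')) i
      (convexHull ℝ (((fun x => castF v + x) '' rowSet W (B i)) ∪ rowSet W (A i)))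
      = fun i' => convexHull ℝ (castF '' (Function.update (fun i' => zrow W (A i')) i
          (((fun z => v + z) '' zrow W (B i)) ∪ zrow W (A i)) i')) := by
    funext i'
    by_cases h : i' = i
    · subst h
      rw [Function.update_self, Function.update_self, translate_rowSet_hull,
        rowSet_eq_hull W (A i'), convexHull_convexHull_union_left,
        convexHull_convexHull_union_right, ← Set.image_union]
    · rw [Function.update_of_ne h, Function.update_of_ne h, rowSet_eq_hull]
  rw [hfun, cayley_hull]

/-- generic lattice-points part -/
lemma lattice_part {d m : ℕ} (G : AddSubgroup (Fin d → ℤ)) (Z : Fin m → Set (Fin d → ℤ))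
    (hfin : ∀ i', (Z i').Finite) (hsub : ∀ i', Z i' ⊆ (G : Set (Fin d → ℤ))) :
    ∃ S : Set ((Fin d → ℝ) × (Fin m → ℝ)), S.Finite ∧
      (S ⊆ {p | ∃ z : (Fin d → ℤ) × (Fin m → ℤ), p = castP z ∧ (z.1 : Fin d → ℤ) ∈ G ∧
        (∑ k, z.2 k) = 1}) ∧
      convexHull ℝ (⋃ i', (fun x => (x, (Pi.single i' 1 : Fin m → ℝ))) '' (castF '' Z i'))
        = convexHull ℝ S := by
  classical
  refine ⟨⋃ i', (fun x => (x, (Pi.single i' 1 : Fin m → ℝ))) '' (castF '' Z i'), ?_, ?_, rfl⟩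
  · exact Set.finite_iUnion fun i' => (((hfin i').image _).image _)
  · rintro p hp
    simp only [Set.mem_iUnion] at hp
    obtain ⟨i', x, ⟨z, hz, rfl⟩, rfl⟩ := hp
    refine ⟨(z, Pi.single i' 1), ?_, hsub i' hz, ?_⟩
    · refine Prod.ext rfl ?_
      show (Pi.single i' 1 : Fin m → ℝ) = castF (Pi.single i' 1 : Fin m → ℤ)
      funext k
      simp [castF, Pi.single_apply, apply_ite (fun t : ℤ => (t : ℝ))]
    · simp [Pi.single_apply]

theorem stmt_9 (d n m : ℕ) (V : Fin n → Finset (Fin d → ℤ))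
    (hV : ∀ j, (V j).Nonempty)
    (hsimp : ∀ j, AffineIndependent ℝ (fun x : (V j : Set (Fin d → ℤ)) => castF x.1))
    (hindep : iSupIndep (fun j => Submodule.span ℝ
      (castF '' {z | ∃ a ∈ V j, ∃ b ∈ V j, z = a - b})))
    (A : Fin m → Fin n → ℕ) (i : Fin m) (j : Fin n)
    (hA : 0 < A i j) (hcol : 1 < ∑ i', A i' j)
    (v : Fin d → ℤ) (hv : v ∈ V j) (hdim : 2 ≤ (V j).card) :
    let A' : Fin m → Fin n → ℕ :=
      Function.update A i (Function.update (A i) j (A i j - 1))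
    let F : Fin n → Finset (Fin d → ℤ) := Function.update V j ((V j).erase v)
    let A'' : Fin (m + 1) → Fin n → ℕ :=
      Fin.insertNth i.castSucc (Function.update (A i) j (A i j - 1)) A
    let Q₁ : Set ((Fin d → ℝ) × (Fin m → ℝ)) :=
      cayley (Function.update (fun i' => rowSet V (A i')) i
        ((fun x => castF v + x) '' rowSet V (A' i)))
    let Q₂ : Set ((Fin d → ℝ) × (Fin m → ℝ)) :=
      cayley (Function.update (fun i' => rowSet F (A i')) i
        (convexHull ℝ (((fun x => castF v + x) '' rowSet F (A' i)) ∪ rowSet F (A i))))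
    let φ₁ : ((Fin d → ℝ) × (Fin m → ℝ)) → ((Fin d → ℝ) × (Fin m → ℝ)) :=
      fun p => (p.1 + p.2 i • castF v, p.2)
    let φ₂ : ((Fin d → ℝ) × (Fin (m + 1) → ℝ)) → ((Fin d → ℝ) × (Fin m → ℝ)) :=
      fun p => (p.1 + p.2 i.castSucc • castF v,
        fun k => (if k = i then p.2 i.castSucc else 0) + p.2 (Fin.succAbove i.castSucc k))
    let latticePts : Set ((Fin d → ℝ) × (Fin m → ℝ)) :=
      {p | ∃ z : (Fin d → ℤ) × (Fin m → ℤ), p = castP z ∧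
        z.1 ∈ AddSubgroup.closure (⋃ j', ((V j' : Set (Fin d → ℤ)))) ∧ (∑ k, z.2 k) = 1}
    -- `φ₁` is a lattice polytope isomorphism `𝒞(A'P) ≅ Q₁`
    (φ₁ '' cayley (fun i' => rowSet V (A' i')) = Q₁ ∧
      Function.Bijective φ₁ ∧
      (∀ z : (Fin d → ℤ) × (Fin m → ℤ), φ₁ (castP z) = castP (z.1 + z.2 i • v, z.2))) ∧
    -- `φ₂` is an affine isomorphism `𝒞(A''F) ≅ Q₂`
    (φ₂ '' cayley (fun k => rowSet F (A'' k)) = Q₂ ∧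
      Set.InjOn φ₂ (cayley (fun k => rowSet F (A'' k)))) ∧
    -- `Q₁` and `Q₂` have all their vertices in `L_P × Λ^{m-1}`
    (∃ S₁ : Set ((Fin d → ℝ) × (Fin m → ℝ)), S₁.Finite ∧ S₁ ⊆ latticePts ∧
      Q₁ = convexHull ℝ S₁) ∧
    (∃ S₂ : Set ((Fin d → ℝ) × (Fin m → ℝ)), S₂.Finite ∧ S₂ ⊆ latticePts ∧
      Q₂ = convexHull ℝ S₂) := by
  intro A' F A'' Q₁ Q₂ φ₁ φ₂ latticePts
  classical
  have hGV : ∀ j', ((V j' : Set (Fin d → ℤ)))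
      ⊆ ((AddSubgroup.closure (⋃ j', ((V j' : Set (Fin d → ℤ))))) : Set (Fin d → ℤ)) :=
    fun j' x hx => AddSubgroup.subset_closure (Set.mem_iUnion.mpr ⟨j', hx⟩)
  have hGF : ∀ j', ((Function.update V j ((V j).erase v) j' : Set (Fin d → ℤ)))
      ⊆ ((AddSubgroup.closure (⋃ j', ((V j' : Set (Fin d → ℤ))))) : Set (Fin d → ℤ)) := by
    intro j' x hx
    by_cases h : j' = j
    · subst h
      rw [Function.update_self] at hx
      exact hGV j' (Finset.mem_coe.mpr (Finset.mem_of_mem_erase (Finset.mem_coe.mp hx)))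
    · rw [Function.update_of_ne h] at hx
      exact hGV j' hx
  have hvG : v ∈ AddSubgroup.closure (⋃ j', ((V j' : Set (Fin d → ℤ)))) :=
    hGV j (Finset.mem_coe.mpr hv)
  refine ⟨⟨part1a V A A' i (fun i' h => Function.update_of_ne h _ _) v,
      part1b i v, part1c i v⟩,
    ⟨part2a F A A' (Function.update (A i) j (A i j - 1)) i (Function.update_self _ _ _) v,
     part2b V hV hsimp hindep A i j hA v hv⟩, ?_, ?_⟩
  · obtain ⟨S, h1, h2, h3⟩ := lattice_part
      (AddSubgroup.closure (⋃ j', ((V j' : Set (Fin d → ℤ)))))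
      (Function.update (fun i' => zrow V (A i')) i ((fun z => v + z) '' zrow V (A' i)))
      (by
        intro i'
        by_cases h : i' = i
        · subst h
          rw [Function.update_self]
          exact (zrow_finite V (A' i')).image _
        · rw [Function.update_of_ne h]
          exact zrow_finite V (A i'))
      (by
        intro i'
        by_cases h : i' = i
        · subst h
          rw [Function.update_self]
          rintro x ⟨z, hz, rfl⟩
          exact add_mem hvG (zrow_subset_closure V (A' i') _ hGV hz)
        · rw [Function.update_of_ne h]
          exact zrow_subset_closure V (A i') _ hGV)
    exact ⟨S, h1, h2, (Q1_hull V A A' i v).trans h3⟩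
  · obtain ⟨S, h1, h2, h3⟩ := lattice_part
      (AddSubgroup.closure (⋃ j', ((V j' : Set (Fin d → ℤ)))))
      (Function.update (fun i' => zrow F (A i')) i
        (((fun z => v + z) '' zrow F (A' i)) ∪ zrow F (A i)))
      (by
        intro i'
        by_cases h : i' = i
        · subst h
          rw [Function.update_self]
          exact ((zrow_finite F (A' i')).image _).union (zrow_finite F (A i'))
        · rw [Function.update_of_ne h]
          exact zrow_finite F (A i'))
      (by
        intro i'
        by_cases h : i' = i
        · subst h
          rw [Function.update_self]
          rintro x hx
          rcases hx with ⟨z, hz, rfl⟩ | hx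
          · exact add_mem hvG (zrow_subset_closure F (A' i') _ hGF hz)
          · exact zrow_subset_closure F (A i') _ hGF hx
        · rw [Function.update_of_ne h]
          exact zrow_subset_closure F (A i') _ hGF)
    exact ⟨S, h1, h2, (Q2_hull F A A' i v).trans h3⟩
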